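/- Let 0 = p_0 < p_1 ≤ ... ≤ p_Q = n be integers and let s : {1,...,n} → ℤ be such that on each interval (p_{j-1}, p_j] the values s_i all have the same sign (all ≥ 0 or all ≤ 0), and each interval (p_{j-1}, p_j] contains at least one index i with s_i ≠ 0. Define the Q×Q matrix B with entries B_{e,j} = ∑_{i=p_{j-1}+1}^{p_j} |s_i| · i^{e-1} for e,j ∈ {1,...,Q}. Then det(B) > 0. -/

import Mathlib

/-- The generalized Vandermonde-type moment matrix with nonnegative weights `|s i|` supported
on disjoint consecutive integer intervals `(p_{j-1}, p_j]`, with at least one nonzero weight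
per interval and sign-constant `s` on each interval, has positive determinant. -/
theorem moment_matrix_det_pos (Q n : ℕ) (p : Fin (Q + 1) → ℕ) (s : ℕ → ℤ)
    (hp0 : p 0 = 0) (hpn : p (Fin.last Q) = n) (hmono : Monotone p)
    (hsign : ∀ j : Fin Q,
      (∀ i, p j.castSucc < i → i ≤ p j.succ → 0 ≤ s i) ∨
      (∀ i, p j.castSucc < i → i ≤ p j.succ → s i ≤ 0))
    (hnz : ∀ j : Fin Q, ∃ i, p j.castSucc < i ∧ i ≤ p j.succ ∧ s i ≠ 0) :
    0 < (Matrix.of fun e j : Fin Q =>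
        ∑ i ∈ Finset.Ioc (p j.castSucc) (p j.succ), |s i| * (i : ℤ) ^ (e : ℕ)).det := by
  classical
  set A : Fin Q → Finset ℕ := fun j => Finset.Ioc (p j.castSucc) (p j.succ) with hA
  set g : Fin Q → ℕ → (Fin Q → ℤ) := fun _ i => fun e => |s i| * (i : ℤ) ^ (e : ℕ) with hg
  rw [← Matrix.det_transpose]
  have key : (Matrix.of fun e j : Fin Q =>
        ∑ i ∈ Finset.Ioc (p j.castSucc) (p j.succ), |s i| * (i : ℤ) ^ (e : ℕ)).transpose.det
      = ∑ r ∈ Fintype.piFinset A,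
          (Matrix.of fun j e : Fin Q => g j (r j) e).det := by
    have h0 : (Matrix.of fun e j : Fin Q =>
        ∑ i ∈ Finset.Ioc (p j.castSucc) (p j.succ), |s i| * (i : ℤ) ^ (e : ℕ)).transpose
        = fun j => ∑ i ∈ A j, g j i := by
      funext j e
      simp [Matrix.transpose, hA, hg, Finset.sum_apply]
    show (Matrix.detRowAlternating (R := ℤ) (n := Fin Q)).toMultilinearMap _ = _
    rw [h0]
    exact MultilinearMap.map_sum_finset _ _ _
  rw [key]
  -- each term equals (∏ |s (r j)|) * Vandermonde det
  have term_eq : ∀ r : Fin Q → ℕ,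
      (Matrix.of fun j e : Fin Q => g j (r j) e).det
      = (∏ j, |s (r j)|) * ∏ i : Fin Q, ∏ j ∈ Finset.Ioi i, ((r j : ℤ) - (r i : ℤ)) := by
    intro r
    have h1 : (Matrix.of fun j e : Fin Q => g j (r j) e)
        = Matrix.of fun j e : Fin Q => |s (r j)| * (Matrix.vandermonde fun j : Fin Q => (r j : ℤ)) j e := by
      funext j e
      simp [hg, Matrix.vandermonde]
    rw [h1, Matrix.det_mul_column, Matrix.det_vandermonde]
  have hstep : ∀ (i j : Fin Q), i < j → ∀ r ∈ Fintype.piFinset A, (r i : ℕ) < r j := by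
    intro i j hij r hr
    rw [Fintype.mem_piFinset] at hr
    have h1 := (hr i)
    have h2 := (hr j)
    simp only [hA, Finset.mem_Ioc] at h1 h2
    have hle : p i.succ ≤ p j.castSucc := hmono (by
      simp only [Fin.le_def, Fin.val_succ, Fin.coe_castSucc]
      exact hij)
    exact lt_of_le_of_lt (le_trans h1.2 hle) h2.1
  apply Finset.sum_pos'
  · intro r hr
    rw [term_eq]
    apply mul_nonneg (Finset.prod_nonneg fun j _ => abs_nonneg _)
    apply Finset.prod_nonneg; intro i _
    apply Finset.prod_nonneg; intro j hj
    have : (r i : ℕ) < r j := hstep i j (Finset.mem_Ioi.mp hj) r hr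
    have : (r i : ℤ) < (r j : ℤ) := by exact_mod_cast this
    linarith
  · refine ⟨fun j => (hnz j).choose, ?_, ?_⟩
    · rw [Fintype.mem_piFinset]
      intro j
      obtain ⟨h1, h2, _⟩ := (hnz j).choose_spec
      rw [hA, Finset.mem_Ioc]; exact ⟨h1, h2⟩
    · rw [term_eq]
      have hmem : (fun j => (hnz j).choose) ∈ Fintype.piFinset A := by
        rw [Fintype.mem_piFinset]
        intro j
        obtain ⟨h1, h2, _⟩ := (hnz j).choose_spec
        rw [hA, Finset.mem_Ioc]; exact ⟨h1, h2⟩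
      apply mul_pos
      · apply Finset.prod_pos
        intro j _
        exact abs_pos.mpr (hnz j).choose_spec.2.2
      · apply Finset.prod_pos; intro i _
        apply Finset.prod_pos; intro j hj
        have : ((hnz i).choose : ℕ) < (hnz j).choose :=
          hstep i j (Finset.mem_Ioi.mp hj) _ hmem
        have : ((hnz i).choose : ℤ) < ((hnz j).choose : ℤ) := by exact_mod_cast this
        linarith
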